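/- Let S be a control semigroup, X a metric space, and n ∈ ℕ. Then asdim_S X ≤ n if and only if there exists g ∈ S such that for all sufficiently large s > 0 there is a cover U of X with multiplicity m(U) ≤ n+1, Lebesgue number L(U) ≥ s, that is g(s)-bounded. -/

import Mathlib

open Filter Set Metric Topology
open scoped NNReal ENNReal

/-- A large-scale (asymptotic) dim-control function: continuous, increasing,
eventually at least the identity, tending to infinity. -/
def IsLSControl (f : ℝ≥0 → ℝ≥0) : Prop :=
  Continuous f ∧ Monotone f ∧ (∀ᶠ x in atTop, x ≤ f x) ∧ Tendsto f atTop atTop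

/-- Asymptotically linear: coincides with a linear function on a neighborhood of infinity. -/
def IsAsympLinear (f : ℝ≥0 → ℝ≥0) : Prop :=
  ∃ a b : ℝ≥0, ∀ᶠ x in atTop, f x = a * x + b

/-- A (large-scale) control semigroup. -/
def IsControlSemigroup (S : Set (ℝ≥0 → ℝ≥0)) : Prop :=
  (∀ f ∈ S, IsLSControl f) ∧
  (∀ f, IsLSControl f → IsAsympLinear f → f ∈ S) ∧
  (∀ f ∈ S, ∀ g ∈ S, f ∘ g ∈ S)

/-- A family of subsets is `s`-disjoint if distinct members are at distance `> s`. -/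
def SDisjoint {X : Type*} [MetricSpace X] (s : ℝ≥0) (𝒰 : Set (Set X)) : Prop :=
  ∀ U ∈ 𝒰, ∀ V ∈ 𝒰, U ≠ V → ∀ x ∈ U, ∀ y ∈ V, (s : ℝ) < dist x y

/-- A family of subsets is `D`-bounded if each member has diameter at most `D`. -/
def BoundedBy {X : Type*} [MetricSpace X] (D : ℝ≥0) (𝒰 : Set (Set X)) : Prop :=
  ∀ U ∈ 𝒰, EMetric.diam U ≤ (D : ℝ≥0∞)

/-- `asdim_S X ≤ n`. -/
def ASDimLE (S : Set (ℝ≥0 → ℝ≥0)) (X : Type*) [MetricSpace X] (n : ℕ) : Prop :=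
  ∃ f ∈ S, ∃ s₀ : ℝ≥0, ∀ s : ℝ≥0, s₀ ≤ s →
    ∃ 𝒰 : Fin (n + 1) → Set (Set X),
      (⋃ i, ⋃₀ 𝒰 i) = univ ∧ ∀ i, SDisjoint s (𝒰 i) ∧ BoundedBy (f s) (𝒰 i)

/-- The `S`-controlled asymptotic dimension, as an element of `ℕ∞`. -/
noncomputable def ASDim (S : Set (ℝ≥0 → ℝ≥0)) (X : Type*) [MetricSpace X] : ℕ∞ :=
  sInf {k : ℕ∞ | ∃ n : ℕ, k = n ∧ ASDimLE S X n}

/-- `S₁ ⪯ S₂` : `S₂` is finer than `S₁`. -/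
def Preceq (S₁ S₂ : Set (ℝ≥0 → ℝ≥0)) : Prop :=
  ∀ f ∈ S₂, ∃ g ∈ S₁, ∀ᶠ x in atTop, f x ≤ g x

lemma lin_mem {S : Set (ℝ≥0 → ℝ≥0)} (hS : IsControlSemigroup S) (a b : ℝ≥0) (ha : 1 ≤ a) :
    (fun x => a * x + b) ∈ S := by
  apply hS.2.1
  · refine ⟨by fun_prop, fun x y h => add_le_add_left (mul_le_mul_right h a) b, ?_, ?_⟩
    · filter_upwards with x
      calc x = 1 * x := (one_mul x).symm
        _ ≤ a * x := mul_le_mul_left ha x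
        _ ≤ a * x + b := le_self_add
    · refine tendsto_atTop_mono (fun x => ?_) tendsto_id
      calc (id x : ℝ≥0) = 1 * x := (one_mul x).symm
        _ ≤ a * x := mul_le_mul_left ha x
        _ ≤ a * x + b := le_self_add
  · exact ⟨a, b, Filter.Eventually.of_forall fun x => rfl⟩
lemma enat_ne_top (m : ℕ) : ((m:ℕ∞)+1) ≠ ⊤ :=
  WithTop.add_ne_top.mpr ⟨WithTop.coe_ne_top, WithTop.one_ne_top⟩
/-- The sets in `𝒰` in which `x` sits at depth at least `t`. -/
def deepGE {X : Type*} [MetricSpace X] (𝒰 : Set (Set X)) (t : ℝ≥0∞) (x : X) : Set (Set X) :=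
  {V | V ∈ 𝒰 ∧ t ≤ EMetric.infEdist x Vᶜ}

/-- The sets in `𝒰` in which `x` sits at depth greater than `t`. -/
def deepGT {X : Type*} [MetricSpace X] (𝒰 : Set (Set X)) (t : ℝ≥0∞) (x : X) : Set (Set X) :=
  {V | V ∈ 𝒰 ∧ t < EMetric.infEdist x Vᶜ}

/-- The "central" set associated to a collection `σ` of members of `𝒰`. -/
def centerSet {X : Type*} [MetricSpace X] (𝒰 : Set (Set X)) (σ : Set (Set X))
    (t₁ t₂ : ℝ≥0∞) (c : ℕ∞) : Set X :=
  {x | σ ⊆ deepGE 𝒰 t₁ x ∧ (deepGT 𝒰 t₂ x).encard ≤ c}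

lemma forward_dir {S : Set (ℝ≥0 → ℝ≥0)} (hS : IsControlSemigroup S)
    {X : Type*} [MetricSpace X] {n : ℕ} (h : ASDimLE S X n) :
    ∃ g ∈ S, ∃ s₀ : ℝ≥0, ∀ s : ℝ≥0, s₀ ≤ s →
      ∃ 𝒰 : Set (Set X), ⋃₀ 𝒰 = univ ∧
        (∀ x : X, {U | U ∈ 𝒰 ∧ x ∈ U}.encard ≤ (n + 1 : ℕ∞)) ∧
        (∀ x : X, (s : ℝ≥0∞) ≤ ⨆ U ∈ 𝒰, EMetric.infEdist x Uᶜ) ∧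
        BoundedBy (g s) 𝒰 := by
  classical
  obtain ⟨f, hfS, s₀, hcov⟩ := h
  obtain ⟨x₁, hx₁⟩ := eventually_atTop.mp (hS.1 f hfS).2.2.1
  have h2 : (fun x : ℝ≥0 => 2 * x) ∈ S := by
    have := lin_mem hS 2 0 one_le_two; simpa using this
  have h3 : (fun x : ℝ≥0 => 3 * x) ∈ S := by
    have := lin_mem hS 3 0 (by norm_num); simpa using this
  set g : ℝ≥0 → ℝ≥0 := (fun x => 2 * x) ∘ (f ∘ (fun x => 3 * x)) with hg
  have hgS : g ∈ S := hS.2.2 _ h2 _ (hS.2.2 _ hfS _ h3)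
  refine ⟨g, hgS, s₀ ⊔ x₁ ⊔ 1, fun s hs => ?_⟩
  have hs1 : (1 : ℝ≥0) ≤ s := le_trans (le_sup_right) hs
  have hspos : (0 : ℝ) < (s : ℝ) := by exact_mod_cast lt_of_lt_of_le one_pos hs1
  have hs0 : s₀ ≤ 3 * s := le_trans (le_trans le_sup_left (le_trans le_sup_left hs)) (by
    calc s = 1 * s := (one_mul s).symm
      _ ≤ 3 * s := mul_le_mul_left (by norm_num) s)
  have hx1s : x₁ ≤ 3 * s := le_trans (le_trans le_sup_right (le_trans le_sup_left hs)) (by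
    calc s = 1 * s := (one_mul s).symm
      _ ≤ 3 * s := mul_le_mul_left (by norm_num) s)
  obtain ⟨𝒰, hcovU, hprop⟩ := hcov (3 * s) hs0
  set 𝒱 : Set (Set X) := {W | ∃ i, ∃ U ∈ 𝒰 i, W = thickening (s : ℝ) U} with h𝒱
  -- key: thickened sets from same family containing a common point coincide
  have key : ∀ (i : Fin (n+1)), ∀ U ∈ 𝒰 i, ∀ V ∈ 𝒰 i, ∀ x : X,
      x ∈ thickening (s : ℝ) U → x ∈ thickening (s : ℝ) V → U = V := by
    intro i U hU V hV x hxU hxV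
    by_contra hUV
    obtain ⟨u, hu, hdu⟩ := mem_thickening_iff.mp hxU
    obtain ⟨v, hv, hdv⟩ := mem_thickening_iff.mp hxV
    have hd := (hprop i).1 U hU V hV hUV u hu v hv
    have : dist u v ≤ dist u x + dist x v := dist_triangle u x v
    have hc : ((3 * s : ℝ≥0) : ℝ) = 3 * (s : ℝ) := by push_cast; ring
    rw [hc] at hd
    rw [dist_comm] at hdu
    nlinarith [hspos]
  refine ⟨𝒱, ?_, ?_, ?_, ?_⟩
  · -- cover
    rw [eq_univ_iff_forall]
    intro x
    have : x ∈ ⋃ i, ⋃₀ 𝒰 i := by rw [hcovU]; trivial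
    obtain ⟨_, ⟨i, rfl⟩, U, hU, hxU⟩ := this
    exact ⟨thickening (s : ℝ) U, ⟨i, U, hU, rfl⟩, self_subset_thickening hspos U hxU⟩
  · -- multiplicity
    intro x
    set T := {W | W ∈ 𝒱 ∧ x ∈ W} with hT
    set idx : Set X → Fin (n + 1) := fun W =>
      if h : ∃ i, ∃ U ∈ 𝒰 i, W = thickening (s : ℝ) U then h.choose else 0 with hidx
    have hspec : ∀ W ∈ 𝒱, ∃ U ∈ 𝒰 (idx W), W = thickening (s : ℝ) U := by
      intro W hW
      have hW' : ∃ i, ∃ U ∈ 𝒰 i, W = thickening (s : ℝ) U := hW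
      rw [hidx]; simp only [dif_pos hW']
      exact hW'.choose_spec
    have hinj : InjOn idx T := by
      intro W₁ hW₁ W₂ hW₂ he
      obtain ⟨U₁, hU₁, rfl⟩ := hspec W₁ hW₁.1
      obtain ⟨U₂, hU₂, hW₂e⟩ := hspec W₂ hW₂.1
      rw [he] at hU₁
      have := key _ U₁ hU₁ U₂ hU₂ x hW₁.2 (hW₂e ▸ hW₂.2)
      rw [hW₂e, this]
    calc T.encard = (idx '' T).encard := (hinj.encard_image).symm
      _ ≤ (univ : Set (Fin (n+1))).encard := encard_le_encard (subset_univ _)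
      _ = (n + 1 : ℕ∞) := by simp [encard_univ]
  · -- Lebesgue
    intro x
    have : x ∈ ⋃ i, ⋃₀ 𝒰 i := by rw [hcovU]; trivial
    obtain ⟨_, ⟨i, rfl⟩, U, hU, hxU⟩ := this
    have h1 : (s : ℝ≥0∞) ≤ EMetric.infEdist x (thickening (s : ℝ) U)ᶜ := by
      refine EMetric.le_infEdist.mpr ?_
      intro y hy
      by_contra hlt
      push_neg at hlt
      apply hy
      rw [mem_thickening_iff]
      refine ⟨x, hxU, ?_⟩
      have : edist y x < (s : ℝ≥0∞) := by rwa [edist_comm]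
      rw [edist_dist] at this
      rw [← ENNReal.ofReal_coe_nnreal] at this
      exact (ENNReal.ofReal_lt_ofReal_iff_of_nonneg dist_nonneg).mp this
    exact le_trans h1 (le_biSup (fun W => EMetric.infEdist x Wᶜ)
      (show thickening (s : ℝ) U ∈ 𝒱 from ⟨i, U, hU, rfl⟩))
  · -- bounded
    rintro W ⟨i, U, hU, rfl⟩
    have hdU : EMetric.diam U ≤ ((f (3 * s) : ℝ≥0) : ℝ≥0∞) := (hprop i).2 U hU
    have h2s : ((2 * s : ℝ≥0) : ℝ≥0∞) ≤ ((f (3 * s) : ℝ≥0) : ℝ≥0∞) := by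
      rw [ENNReal.coe_le_coe]
      calc 2 * s ≤ 3 * s := mul_le_mul_left (by norm_num) s
        _ ≤ f (3 * s) := hx₁ _ hx1s
    calc EMetric.diam (thickening (s : ℝ) U) ≤ EMetric.diam U + 2 * (s : ℝ≥0∞) :=
          ediam_thickening_le s
      _ ≤ ((f (3 * s) : ℝ≥0) : ℝ≥0∞) + ((2 * s : ℝ≥0) : ℝ≥0∞) :=
          add_le_add hdU (le_of_eq (by push_cast; ring))
      _ ≤ ((f (3 * s) : ℝ≥0) : ℝ≥0∞) + ((f (3 * s) : ℝ≥0) : ℝ≥0∞) := by gcongr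
      _ = ((g s : ℝ≥0) : ℝ≥0∞) := by rw [hg]; push_cast [Function.comp]; ring
lemma backward_dir {S : Set (ℝ≥0 → ℝ≥0)} (hS : IsControlSemigroup S)
    {X : Type*} [MetricSpace X] {n : ℕ}
    (h : ∃ g ∈ S, ∃ s₀ : ℝ≥0, ∀ s : ℝ≥0, s₀ ≤ s →
      ∃ 𝒰 : Set (Set X), ⋃₀ 𝒰 = univ ∧
        (∀ x : X, {U | U ∈ 𝒰 ∧ x ∈ U}.encard ≤ (n + 1 : ℕ∞)) ∧
        (∀ x : X, (s : ℝ≥0∞) ≤ ⨆ U ∈ 𝒰, EMetric.infEdist x Uᶜ) ∧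
        BoundedBy (g s) 𝒰) :
    ASDimLE S X n := by
  classical
  obtain ⟨g, hgS, s₀, hcov⟩ := h
  set lin : ℝ≥0 → ℝ≥0 := fun x => ((n : ℝ≥0) + 1) * x + ((n : ℝ≥0) + 2) with hlin
  have hlinS : lin ∈ S := lin_mem hS _ _ (by simp [le_add_iff_nonneg_left])
  refine ⟨g ∘ lin, hS.2.2 g hgS lin hlinS, s₀, fun s hs => ?_⟩
  have hrs : s₀ ≤ lin s := le_trans hs (by
    calc s = 1 * s := (one_mul s).symm
      _ ≤ ((n : ℝ≥0) + 1) * s := mul_le_mul_left (by simp [le_add_iff_nonneg_left]) s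
      _ ≤ lin s := le_self_add)
  obtain ⟨𝒰, hcovU, hmult, hleb, hbdd⟩ := hcov (lin s) hrs
  -- depth scales
  set Δ : ℝ≥0∞ := (s : ℝ≥0∞) + 1 with hΔ
  set ℓ : ℕ → ℝ≥0∞ := fun k => ((n + 1 - k : ℕ) : ℝ≥0∞) * Δ with hℓ
  have hΔtop : Δ ≠ ⊤ := by simp [hΔ]
  have hΔpos : 0 < Δ := by
    rw [hΔ]; exact lt_of_lt_of_le zero_lt_one le_add_self
  have hℓtop : ∀ k, ℓ k ≠ ⊤ := fun k => ENNReal.mul_ne_top (by simp) hΔtop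
  have hstep : ∀ k, k ≤ n → ℓ k = ℓ (k + 1) + Δ := by
    intro k hk
    have : n + 1 - k = (n + 1 - (k + 1)) + 1 := by omega
    rw [hℓ]; simp only [this]
    push_cast
    ring
  have hℓpos : ∀ k, k ≤ n → 0 < ℓ k := by
    intro k hk
    rw [hstep k hk]
    exact lt_of_lt_of_le hΔpos le_add_self
  -- basic facts about depth
  have hmem_of_pos : ∀ (x : X) (V : Set X), 0 < EMetric.infEdist x Vᶜ → x ∈ V := by
    intro x V hpos
    by_contra hx
    have hz : EMetric.infEdist x Vᶜ = 0 :=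
      EMetric.infEdist_zero_of_mem (Set.mem_compl hx)
    rw [hz] at hpos
    exact lt_irrefl _ hpos
  have hGTcard : ∀ (x : X) (t : ℝ≥0∞), (deepGT 𝒰 t x).encard ≤ (n + 1 : ℕ∞) := by
    intro x t
    refine le_trans (encard_le_encard ?_) (hmult x)
    rintro V ⟨hV, hd⟩
    exact ⟨hV, hmem_of_pos x V (lt_of_le_of_lt (zero_le : (0 : ℝ≥0∞) ≤ t) hd)⟩
  -- moving a point a distance ≤ s decreases depth level by less than one step
  have hmove : ∀ (x y : X) (V : Set X) (k : ℕ), k ≤ n → edist y x ≤ (s : ℝ≥0∞) →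
      ℓ k ≤ EMetric.infEdist y Vᶜ → ℓ (k + 1) < EMetric.infEdist x Vᶜ := by
    intro x y V k hk hd hdeep
    have h1 : EMetric.infEdist y Vᶜ ≤ EMetric.infEdist x Vᶜ + edist y x :=
      EMetric.infEdist_le_infEdist_add_edist
    have h2 : ℓ (k + 1) + 1 + (s : ℝ≥0∞) ≤ EMetric.infEdist x Vᶜ + (s : ℝ≥0∞) := by
      calc ℓ (k + 1) + 1 + (s : ℝ≥0∞) = ℓ (k + 1) + Δ := by rw [hΔ]; ring
        _ = ℓ k := (hstep k hk).symm
        _ ≤ EMetric.infEdist y Vᶜ := hdeep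
        _ ≤ EMetric.infEdist x Vᶜ + edist y x := h1
        _ ≤ EMetric.infEdist x Vᶜ + (s : ℝ≥0∞) := add_le_add_right hd _
    have h3 : ℓ (k + 1) + 1 ≤ EMetric.infEdist x Vᶜ :=
      (ENNReal.add_le_add_iff_right (by simp)).mp h2
    exact lt_of_lt_of_le (ENNReal.lt_add_right (hℓtop _) one_ne_zero) h3
  -- the families
  set 𝒱 : Fin (n + 1) → Set (Set X) := fun i =>
    {w | ∃ σ : Set (Set X), σ ⊆ 𝒰 ∧ σ.encard = (i : ℕ∞) + 1 ∧
      w = centerSet 𝒰 σ (ℓ i) (ℓ (i + 1)) ((i : ℕ∞) + 1)} with h𝒱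
  refine ⟨𝒱, ?_, fun i => ⟨?_, ?_⟩⟩
  · -- covering
    rw [eq_univ_iff_forall]
    intro x
    -- there is a set of depth > ℓ 0
    have hr : ((lin s : ℝ≥0) : ℝ≥0∞) = ℓ 0 + 1 := by
      rw [hlin, hℓ, hΔ]; push_cast; ring
    have h0 : ∃ V ∈ 𝒰, ℓ 0 < EMetric.infEdist x Vᶜ := by
      have := hleb x
      rw [hr] at this
      have h1 : ℓ 0 < ⨆ U ∈ 𝒰, EMetric.infEdist x Uᶜ :=
        lt_of_lt_of_le (ENNReal.lt_add_right (hℓtop 0) one_ne_zero) this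
      simp only [lt_iSup_iff] at h1
      obtain ⟨V, hV, hd⟩ := h1
      exact ⟨V, hV, hd⟩
    -- minimal k with small strict-depth count
    have hPn : (deepGT 𝒰 (ℓ (n + 1)) x).encard ≤ (n : ℕ∞) + 1 := by
      have := hGTcard x (ℓ (n + 1)); push_cast at this ⊢; exact this
    set P : ℕ → Prop := fun k => (deepGT 𝒰 (ℓ (k + 1)) x).encard ≤ (k : ℕ∞) + 1 with hP
    have hPex : ∃ k, P k := ⟨n, hPn⟩
    obtain ⟨k, hk, hkmin⟩ : ∃ k, P k ∧ ∀ j < k, ¬ P j :=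
      ⟨Nat.find hPex, Nat.find_spec hPex, fun j hj => Nat.find_min hPex hj⟩
    have hkn : k ≤ n := by
      by_contra hc
      exact hkmin n (by omega) hPn
    -- depth-≥ count at level k is at least k+1
    have hBk : (k : ℕ∞) + 1 ≤ (deepGE 𝒰 (ℓ k) x).encard := by
      rcases Nat.eq_zero_or_pos k with hk0 | hkpos
      · obtain ⟨V, hV, hVd⟩ := h0
        rw [hk0]
        have : V ∈ deepGE 𝒰 (ℓ 0) x := ⟨hV, le_of_lt hVd⟩
        simpa using one_le_encard_iff_nonempty.mpr ⟨V, this⟩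
      · obtain ⟨j, rfl⟩ : ∃ j, k = j + 1 := ⟨k - 1, by omega⟩
        have hnotP : ¬ P j := hkmin j (by omega)
        rw [hP] at hnotP
        push_neg at hnotP
        have h1 : (j : ℕ∞) + 1 + 1 ≤ (deepGT 𝒰 (ℓ (j + 1)) x).encard :=
          (ENat.add_one_le_iff (enat_ne_top j)).mpr hnotP
        have h2 : deepGT 𝒰 (ℓ (j + 1)) x ⊆ deepGE 𝒰 (ℓ (j + 1)) x := by
          rintro V ⟨hV, hd⟩; exact ⟨hV, le_of_lt hd⟩
        calc ((j + 1 : ℕ) : ℕ∞) + 1 = (j : ℕ∞) + 1 + 1 := by push_cast; ring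
          _ ≤ (deepGT 𝒰 (ℓ (j + 1)) x).encard := h1
          _ ≤ (deepGE 𝒰 (ℓ (j + 1)) x).encard := encard_le_encard h2
    obtain ⟨σ, hσsub, hσcard⟩ := Set.exists_subset_encard_eq hBk
    have hσ𝒰 : σ ⊆ 𝒰 := fun V hV => (hσsub hV).1
    refine mem_iUnion.mpr ⟨⟨k, by omega⟩, ?_⟩
    refine ⟨centerSet 𝒰 σ (ℓ k) (ℓ (k + 1)) ((k : ℕ∞) + 1), ⟨σ, hσ𝒰, hσcard, rfl⟩, hσsub, hk⟩
  · -- s-disjointness of family i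
    rintro w₁ ⟨σ, hσ𝒰, hσc, rfl⟩ w₂ ⟨τ, hτ𝒰, hτc, rfl⟩ hne x hx y hy
    by_contra hdle
    push_neg at hdle
    have hστ : σ ≠ τ := fun he => hne (by rw [he])
    have hin : (n : ℕ) ≥ (i : ℕ) → True := fun _ => trivial
    have hile : (i : ℕ) ≤ n := by omega
    have hed : edist y x ≤ (s : ℝ≥0∞) := by
      rw [edist_comm, edist_dist, ← ENNReal.ofReal_coe_nnreal]
      exact ENNReal.ofReal_le_ofReal hdle
    have hsub : σ ∪ τ ⊆ deepGT 𝒰 (ℓ (i + 1)) x := by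
      rintro V (hV | hV)
      · obtain ⟨hV𝒰, hVd⟩ := hx.1 hV
        exact ⟨hV𝒰, hmove x x V i hile (by simp) hVd⟩
      · obtain ⟨hV𝒰, hVd⟩ := hy.1 hV
        exact ⟨hV𝒰, hmove x y V i hile hed hVd⟩
    have hcnt : (deepGT 𝒰 (ℓ (i + 1)) x).encard ≤ (i : ℕ∞) + 1 := hx.2
    have contra : ∀ (ρ : Set (Set X)) (V : Set X), ρ.encard = (i : ℕ∞) + 1 →
        ρ ⊆ deepGT 𝒰 (ℓ (i + 1)) x → V ∉ ρ → V ∈ deepGT 𝒰 (ℓ (i + 1)) x → False := by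
      intro ρ V hρc hρsub hVρ hVin
      have h1 : (insert V ρ).encard = (i : ℕ∞) + 1 + 1 := by
        rw [encard_insert_of_notMem hVρ, hρc]
      have h2 : (insert V ρ).encard ≤ (i : ℕ∞) + 1 :=
        le_trans (encard_le_encard (insert_subset hVin hρsub)) hcnt
      rw [h1] at h2
      have := (ENat.add_one_le_iff (enat_ne_top i)).mp h2
      exact lt_irrefl _ this
    have hdiff : ∃ V, (V ∈ σ ∧ V ∉ τ) ∨ (V ∈ τ ∧ V ∉ σ) := by
      by_contra hc
      push_neg at hc
      exact hστ (Subset.antisymm (fun V hV => (hc V).1 hV) (fun V hV => (hc V).2 hV))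
    obtain ⟨V, ⟨hVσ, hVτ⟩ | ⟨hVτ, hVσ⟩⟩ := hdiff
    · exact contra τ V hτc (subset_trans subset_union_right hsub) hVτ
        (hsub (mem_union_left τ hVσ))
    · exact contra σ V hσc (subset_trans subset_union_left hsub) hVσ
        (hsub (mem_union_right σ hVτ))
  · -- boundedness of family i
    rintro w ⟨σ, hσ𝒰, hσc, rfl⟩
    have hile : (i : ℕ) ≤ n := by omega
    have hσne : σ.Nonempty := by
      rw [← one_le_encard_iff_nonempty, hσc]
      exact le_add_self
    obtain ⟨V₀, hV₀⟩ := hσne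
    have hsub : centerSet 𝒰 σ (ℓ i) (ℓ (i + 1)) ((i : ℕ∞) + 1) ⊆ V₀ := by
      intro x hx
      obtain ⟨_, hVd⟩ := hx.1 hV₀
      exact hmem_of_pos x V₀ (lt_of_lt_of_le (hℓpos i hile) hVd)
    calc EMetric.diam _ ≤ EMetric.diam V₀ := EMetric.diam_mono hsub
      _ ≤ (((g ∘ lin) s : ℝ≥0) : ℝ≥0∞) := hbdd V₀ (hσ𝒰 hV₀)
lemma asdimLE_mono {S : Set (ℝ≥0 → ℝ≥0)} {X : Type*} [MetricSpace X] {m n : ℕ}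
    (h : ASDimLE S X m) (hmn : m ≤ n) : ASDimLE S X n := by
  obtain ⟨f, hf, s₀, hc⟩ := h
  refine ⟨f, hf, s₀, fun s hs => ?_⟩
  obtain ⟨𝒰, hU, hprop⟩ := hc s hs
  refine ⟨fun i => if h : (i : ℕ) < m + 1 then 𝒰 ⟨i, h⟩ else ∅, ?_, fun i => ?_⟩
  · rw [eq_univ_iff_forall]
    intro x
    have : x ∈ ⋃ i, ⋃₀ 𝒰 i := by rw [hU]; trivial
    obtain ⟨_, ⟨j, rfl⟩, hm⟩ := this
    refine mem_iUnion.mpr ⟨⟨j, by omega⟩, ?_⟩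
    simpa [j.isLt] using hm
  · by_cases hi : (i : ℕ) < m + 1
    · simpa [hi] using hprop ⟨i, hi⟩
    · simp only [hi, dif_neg, not_false_iff]
      exact ⟨fun U hU => absurd hU (notMem_empty U),
        fun U hU => absurd hU (notMem_empty U)⟩
lemma asdim_le_iff {S : Set (ℝ≥0 → ℝ≥0)} {X : Type*} [MetricSpace X] {n : ℕ} :
    ASDim S X ≤ (n : ℕ∞) ↔ ASDimLE S X n := by
  constructor
  · intro h
    have hex : ∃ m : ℕ, m ≤ n ∧ ASDimLE S X m := by
      by_contra hc
      push_neg at hc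
      have h2 : ((n : ℕ∞) + 1) ≤ ASDim S X := by
        apply le_sInf
        rintro k ⟨m, rfl, hm⟩
        have : ¬ m ≤ n := fun hle => (hc m hle) hm
        have : n + 1 ≤ m := by omega
        exact_mod_cast Nat.cast_le.mpr this
      have h3 := le_trans h2 h
      have h4 : (n : ℕ∞) < (n : ℕ∞) + 1 := by
        exact_mod_cast Nat.lt_succ_self n
      exact absurd h3 (not_le.mpr h4)
    obtain ⟨m, hmn, hm⟩ := hex
    exact asdimLE_mono hm hmn
  · intro h
    exact sInf_le ⟨n, rfl, h⟩

/-- `asdim_S X ≤ n` iff there is `g ∈ S` such that for all sufficiently large `s`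
there is a `g(s)`-bounded cover of `X` of multiplicity at most `n+1` and
Lebesgue number at least `s`.  Here the Lebesgue number condition is expressed
pointwise: for every `x`, `sup_{U ∈ 𝒰} d(x, X ∖ U) ≥ s`. -/
theorem asdim_le_iff_multiplicity_lebesgue (S : Set (ℝ≥0 → ℝ≥0)) (hS : IsControlSemigroup S)
    (X : Type*) [MetricSpace X] (n : ℕ) :
    ASDim S X ≤ (n : ℕ∞) ↔
      ∃ g ∈ S, ∃ s₀ : ℝ≥0, ∀ s : ℝ≥0, s₀ ≤ s →
        ∃ 𝒰 : Set (Set X), ⋃₀ 𝒰 = univ ∧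
          (∀ x : X, {U | U ∈ 𝒰 ∧ x ∈ U}.encard ≤ (n + 1 : ℕ∞)) ∧
          (∀ x : X, (s : ℝ≥0∞) ≤ ⨆ U ∈ 𝒰, EMetric.infEdist x Uᶜ) ∧
          BoundedBy (g s) 𝒰 := by
  constructor
  · intro h
    exact forward_dir hS (asdim_le_iff.mp h)
  · intro h
    exact asdim_le_iff.mpr (backward_dir hS h)
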